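/- For a simple eigenvalue λ of a matrix M ∈ ℂ^{n×n} with unit right and left eigenvectors x and y, and any matrix E with the same sparsity structure as M satisfying ‖E‖_F = 1, one has |y^H E x| / |y^H x| ≤ ‖(y x^H)|_S‖_F / |y^H x|, where (·)|_S denotes entrywise projection onto the sparsity pattern S of M; moreover the bound is attained for E = (y x^H)|_S / ‖(y x^H)|_S‖_F (assuming (y x^H)|_S ≠ 0). -/

import Mathlib

open Matrix

/-- Frobenius norm of a complex matrix. -/
noncomputable def frob {n : ℕ} (M : Matrix (Fin n) (Fin n) ℂ) : ℝ :=
  Real.sqrt (∑ i, ∑ j, ‖M i j‖ ^ 2)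

/-- Entrywise projection of `N` onto the sparsity pattern of `M`. -/
noncomputable def projPat {n : ℕ} (M N : Matrix (Fin n) (Fin n) ℂ) : Matrix (Fin n) (Fin n) ℂ :=
  Matrix.of fun i j => if M i j ≠ 0 then N i j else 0

lemma frob_pos {n : ℕ} (A : Matrix (Fin n) (Fin n) ℂ) (hA : A ≠ 0) : 0 < frob A := by
  rw [frob, Real.sqrt_pos]
  obtain ⟨i, j, hij⟩ : ∃ i j, A i j ≠ 0 := by
    by_contra h
    push_neg at h
    exact hA (by ext i j; simp [h i j])
  refine Finset.sum_pos' (fun i _ => Finset.sum_nonneg fun j _ => by positivity)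
    ⟨i, Finset.mem_univ i, Finset.sum_pos' (fun j _ => by positivity)
      ⟨j, Finset.mem_univ j, pow_pos (norm_pos_iff.mpr hij) 2⟩⟩

lemma key {n : ℕ} (M E : Matrix (Fin n) (Fin n) ℂ) (x y : Fin n → ℂ)
    (hE : ∀ i j, M i j = 0 → E i j = 0) :
    star y ⬝ᵥ E.mulVec x =
      ∑ i, ∑ j, (starRingEnd ℂ) (projPat M (Matrix.of fun i j => y i * star (x j)) i j) * E i j := by
  unfold projPat
  simp only [dotProduct, mulVec, dotProduct, Finset.mul_sum, Matrix.of_apply, Pi.star_apply]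
  refine Finset.sum_congr rfl fun i _ => Finset.sum_congr rfl fun j _ => ?_
  by_cases h : M i j = 0
  · simp [h, hE i j h]
  · simp only [ne_eq, h, not_false_eq_true, if_true, starRingEnd_apply, star_mul', star_star]
    ring

lemma frob_sq {n : ℕ} (A : Matrix (Fin n) (Fin n) ℂ) :
    frob A ^ 2 = ∑ i, ∑ j, ‖A i j‖ ^ 2 := by
  rw [frob]
  exact Real.sq_sqrt (by positivity)

lemma cs {n : ℕ} (A E : Matrix (Fin n) (Fin n) ℂ) :
    ‖∑ i, ∑ j, (starRingEnd ℂ) (A i j) * E i j‖ ≤ frob A * frob E := by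
  classical
  let a : EuclideanSpace ℂ (Fin n × Fin n) := WithLp.toLp 2 (fun p : Fin n × Fin n => A p.1 p.2)
  let e : EuclideanSpace ℂ (Fin n × Fin n) := WithLp.toLp 2 (fun p : Fin n × Fin n => E p.1 p.2)
  have h := norm_inner_le_norm (𝕜 := ℂ) a e
  rw [EuclideanSpace.norm_eq, EuclideanSpace.norm_eq] at h
  have hinner : (inner ℂ a e : ℂ) = ∑ i, ∑ j, (starRingEnd ℂ) (A i j) * E i j := by
    simp [PiLp.inner_apply, a, e, RCLike.inner_apply, Fintype.sum_prod_type, mul_comm]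
  have h1 : (∑ p : Fin n × Fin n, ‖a p‖ ^ 2) = ∑ i, ∑ j, ‖A i j‖ ^ 2 := by
    simp [a, Fintype.sum_prod_type]
  have h2 : (∑ p : Fin n × Fin n, ‖e p‖ ^ 2) = ∑ i, ∑ j, ‖E i j‖ ^ 2 := by
    simp [e, Fintype.sum_prod_type]
  rw [hinner, h1, h2] at h
  exact h

/-- Structured eigenvalue perturbation bound: for any `E` with the sparsity pattern of `M`
and `‖E‖_F = 1`, `|yᴴEx|/|yᴴx| ≤ ‖(yxᴴ)|_S‖_F/|yᴴx|`, with equality attained at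
`E = (yxᴴ)|_S / ‖(yxᴴ)|_S‖_F`. -/
theorem stmt1 {n : ℕ} (M E : Matrix (Fin n) (Fin n) ℂ) (lam : ℂ) (x y : Fin n → ℂ)
    (hsimple : (Matrix.charpoly M).rootMultiplicity lam = 1)
    (hx : M.mulVec x = lam • x) (hxunit : ∑ i, ‖x i‖ ^ 2 = 1)
    (hy : Mᴴ.mulVec y = (starRingEnd ℂ) lam • y) (hyunit : ∑ i, ‖y i‖ ^ 2 = 1)
    (hyx : star y ⬝ᵥ x ≠ 0)
    (hE : ∀ i j, M i j = 0 → E i j = 0) (hEF : frob E = 1) :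
    ‖star y ⬝ᵥ E.mulVec x‖ / ‖star y ⬝ᵥ x‖ ≤
      frob (projPat M (Matrix.of fun i j => y i * star (x j))) / ‖star y ⬝ᵥ x‖ ∧
    (projPat M (Matrix.of fun i j => y i * star (x j)) ≠ 0 →
      ‖star y ⬝ᵥ
          (((frob (projPat M (Matrix.of fun i j => y i * star (x j))))⁻¹ •
            projPat M (Matrix.of fun i j => y i * star (x j))).mulVec x)‖ /
          ‖star y ⬝ᵥ x‖ =
        frob (projPat M (Matrix.of fun i j => y i * star (x j))) / ‖star y ⬝ᵥ x‖) := by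
  set A := projPat M (Matrix.of fun i j => y i * star (x j)) with hA
  have hnorm : 0 < ‖star y ⬝ᵥ x‖ := norm_pos_iff.mpr hyx
  constructor
  · rw [key M E x y hE]
    have h := cs A E
    rw [hEF, mul_one] at h
    gcongr
  · intro hAne
    have hc : 0 < frob A := frob_pos A hAne
    have hc' : ((frob A : ℝ) : ℂ) ≠ 0 := by exact_mod_cast hc.ne'
    have hsp : ∀ i j, M i j = 0 → ((frob A)⁻¹ • A) i j = 0 := by
      intro i j hij
      simp [hA, projPat, hij]
    rw [key M _ x y hsp]
    have hterm : ∀ i j, (starRingEnd ℂ) (A i j) * ((frob A)⁻¹ • A) i j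
        = ((frob A)⁻¹ : ℂ) * ((‖A i j‖ ^ 2 : ℝ) : ℂ) := by
      intro i j
      simp only [Matrix.smul_apply]
      rw [Complex.real_smul]
      push_cast
      rw [show ((‖A i j‖ : ℂ)) ^ 2 = ((Complex.normSq (A i j) : ℝ) : ℂ) by
        rw [Complex.normSq_eq_norm_sq]; norm_cast]
      rw [Complex.normSq_eq_conj_mul_self]
      ring
    have hsq := frob_sq A
    have hsum : (∑ i, ∑ j, (starRingEnd ℂ) (A i j) * ((frob A)⁻¹ • A) i j)
        = ((frob A : ℝ) : ℂ) := by
      simp only [hterm, ← Finset.mul_sum]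
      rw [show (∑ i, ∑ j, ((‖A i j‖ ^ 2 : ℝ) : ℂ)) = ((frob A ^ 2 : ℝ) : ℂ) by
        rw [hsq]; norm_cast]
      push_cast
      field_simp
    rw [hsum, Complex.norm_real, Real.norm_eq_abs, abs_of_pos hc]
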